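/- Let Φ₁, Φ₂ be two orthonormal bases of ℂ^N with mutual incoherence μ = max over basis vectors φ∈Φ₁, ψ∈Φ₂ of |⟨φ,ψ⟩|. If a nonzero f ∈ ℂ^N has representation coefficients α₁ in Φ₁ supported on Γ₁ and coefficients α₂ in Φ₂ supported on Γ₂, then |Γ₁|·|Γ₂| ≥ 1/μ², and consequently |Γ₁| + |Γ₂| ≥ 2/μ. -/

import Mathlib

open scoped Classical
open Matrix

lemma norm_sum_preserved {N : ℕ} (A : Matrix (Fin N) (Fin N) ℂ)
    (hA : A ∈ Matrix.unitaryGroup (Fin N) ℂ) (f : Fin N → ℂ) :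
    ∑ j, ‖(Aᴴ *ᵥ f) j‖ ^ 2 = ∑ i, ‖f i‖ ^ 2 := by
  have hAA : A * Aᴴ = 1 := hA.2
  have key : star (Aᴴ *ᵥ f) ⬝ᵥ (Aᴴ *ᵥ f) = star f ⬝ᵥ f := by
    rw [star_mulVec, conjTranspose_conjTranspose, dotProduct_mulVec,
      vecMul_vecMul, hAA, vecMul_one]
  have h1 : ∀ v : Fin N → ℂ, (star v ⬝ᵥ v).re = ∑ j, ‖v j‖ ^ 2 := by
    intro v
    simp only [dotProduct, Pi.star_apply, Complex.re_sum]
    refine Finset.sum_congr rfl fun j _ => ?_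
    rw [← Complex.normSq_eq_norm_sq, mul_comm, Complex.star_def, Complex.mul_conj, Complex.ofReal_re]
  rw [← h1, ← h1, key]

/-- Elad–Bruckstein generalized uncertainty principle: if `f ≠ 0` has
coefficient supports `Γ₁, Γ₂` in two orthonormal bases `Φ₁, Φ₂` of `ℂ^N` with
mutual incoherence `μ`, then `|Γ₁|·|Γ₂| ≥ 1/μ²` and `|Γ₁| + |Γ₂| ≥ 2/μ`. -/
theorem stmt_5 (N : ℕ) (Φ₁ Φ₂ : Matrix (Fin N) (Fin N) ℂ)
    (h₁ : Φ₁ ∈ Matrix.unitaryGroup (Fin N) ℂ)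
    (h₂ : Φ₂ ∈ Matrix.unitaryGroup (Fin N) ℂ)
    (μ : ℝ)
    (hμ : IsGreatest {x : ℝ | ∃ j k, x = ‖(Φ₁ᴴ * Φ₂) j k‖} μ)
    (f : Fin N → ℂ) (hf : f ≠ 0)
    (Γ₁ Γ₂ : Finset (Fin N))
    (hΓ₁ : Γ₁ = Finset.univ.filter (fun j => (Φ₁ᴴ *ᵥ f) j ≠ 0))
    (hΓ₂ : Γ₂ = Finset.univ.filter (fun k => (Φ₂ᴴ *ᵥ f) k ≠ 0)) :
    1 / μ ^ 2 ≤ (Γ₁.card : ℝ) * Γ₂.card ∧ 2 / μ ≤ (Γ₁.card : ℝ) + Γ₂.card := by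
  classical
  set M := Φ₁ᴴ * Φ₂ with hM
  set α := Φ₁ᴴ *ᵥ f with hα
  set β := Φ₂ᴴ *ᵥ f with hβ
  have hμ0 : 0 ≤ μ := by
    obtain ⟨j, k, hjk⟩ := hμ.1
    rw [hjk]; exact norm_nonneg _
  have hbound : ∀ j k, ‖M j k‖ ≤ μ := fun j k => hμ.2 ⟨j, k, rfl⟩
  set E := ∑ j, ‖α j‖ ^ 2 with hE
  have hEf : E = ∑ i, ‖f i‖ ^ 2 := norm_sum_preserved Φ₁ h₁ f
  have hEβ : ∑ k, ‖β k‖ ^ 2 = E := by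
    rw [hE]; rw [hα, hβ, norm_sum_preserved Φ₂ h₂ f, norm_sum_preserved Φ₁ h₁ f]
  have hEpos : 0 < E := by
    rw [hEf]
    have : ∃ i, f i ≠ 0 := by
      by_contra h
      push_neg at h
      exact hf (funext h)
    obtain ⟨i, hi⟩ := this
    refine Finset.sum_pos' (fun j _ => by positivity) ⟨i, Finset.mem_univ i, ?_⟩
    have := norm_pos_iff.mpr hi
    positivity
  -- f = Φ₁ *ᵥ α
  have hu1 : Φ₁ * Φ₁ᴴ = 1 := h₁.2
  have hfα : f = Φ₁ *ᵥ α := by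
    rw [hα, mulVec_mulVec, hu1, one_mulVec]
  -- β k = ∑ j, conj (M j k) * α j
  have hβα : ∀ k, β k = ∑ j, (starRingEnd ℂ) (M j k) * α j := by
    intro k
    have : β = Mᴴ *ᵥ α := by
      have hMH : Mᴴ = Φ₂ᴴ * Φ₁ := by
        rw [hM, conjTranspose_mul, conjTranspose_conjTranspose]
      rw [hMH, ← mulVec_mulVec, ← hfα]
    rw [this]
    simp [mulVec, dotProduct, conjTranspose_apply]
  -- restrict α to Γ₁
  have hαzero : ∀ j, j ∉ Γ₁ → α j = 0 := by
    intro j hj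
    rw [hΓ₁] at hj
    simpa using hj
  -- per-k bound
  have hkey : ∀ k, ‖β k‖ ≤ μ * ∑ j ∈ Γ₁, ‖α j‖ := by
    intro k
    rw [hβα k]
    have hsum : ∑ j, (starRingEnd ℂ) (M j k) * α j
        = ∑ j ∈ Γ₁, (starRingEnd ℂ) (M j k) * α j := by
      refine (Finset.sum_subset (Finset.subset_univ Γ₁) ?_).symm
      intro j _ hj
      rw [hαzero j hj, mul_zero]
    rw [hsum]
    calc ‖∑ j ∈ Γ₁, (starRingEnd ℂ) (M j k) * α j‖
        ≤ ∑ j ∈ Γ₁, ‖(starRingEnd ℂ) (M j k) * α j‖ :=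
          norm_sum_le _ _
      _ ≤ ∑ j ∈ Γ₁, μ * ‖α j‖ := by
          refine Finset.sum_le_sum fun j _ => ?_
          rw [norm_mul, Complex.norm_conj]
          exact mul_le_mul_of_nonneg_right (hbound j k) (norm_nonneg _)
      _ = μ * ∑ j ∈ Γ₁, ‖α j‖ := (Finset.mul_sum _ _ _).symm
  -- squared bound
  have hkey2 : ∀ k, ‖β k‖ ^ 2 ≤ μ ^ 2 * Γ₁.card * E := by
    intro k
    have h1 : ‖β k‖ ^ 2 ≤ (μ * ∑ j ∈ Γ₁, ‖α j‖) ^ 2 := by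
      have := hkey k
      have h0 : (0:ℝ) ≤ ‖β k‖ := norm_nonneg _
      nlinarith
    have hCS : (∑ j ∈ Γ₁, ‖α j‖) ^ 2 ≤ Γ₁.card * ∑ j ∈ Γ₁, ‖α j‖ ^ 2 :=
      sq_sum_le_card_mul_sum_sq
    have hsub : ∑ j ∈ Γ₁, ‖α j‖ ^ 2 ≤ E := by
      rw [hE]
      exact Finset.sum_le_sum_of_subset_of_nonneg (Finset.subset_univ Γ₁)
        (fun j _ _ => by positivity)
    have hμsq : (0:ℝ) ≤ μ ^ 2 := sq_nonneg μ
    calc ‖β k‖ ^ 2 ≤ (μ * ∑ j ∈ Γ₁, ‖α j‖) ^ 2 := h1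
      _ = μ ^ 2 * (∑ j ∈ Γ₁, ‖α j‖) ^ 2 := by ring
      _ ≤ μ ^ 2 * (Γ₁.card * ∑ j ∈ Γ₁, ‖α j‖ ^ 2) :=
          mul_le_mul_of_nonneg_left hCS hμsq
      _ ≤ μ ^ 2 * (Γ₁.card * E) := by
          refine mul_le_mul_of_nonneg_left ?_ hμsq
          exact mul_le_mul_of_nonneg_left hsub (Nat.cast_nonneg _)
      _ = μ ^ 2 * Γ₁.card * E := by ring
  -- main inequality
  have hβsupp : ∑ k, ‖β k‖ ^ 2 = ∑ k ∈ Γ₂, ‖β k‖ ^ 2 := by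
    refine (Finset.sum_subset (Finset.subset_univ Γ₂) ?_).symm
    intro k _ hk
    rw [hΓ₂] at hk
    simp only [Finset.mem_filter, Finset.mem_univ, true_and, not_not] at hk
    rw [hk]
    simp
  have hmain : E ≤ Γ₂.card * (μ ^ 2 * Γ₁.card * E) := by
    calc E = ∑ k ∈ Γ₂, ‖β k‖ ^ 2 := by rw [← hEβ, hβsupp]
      _ ≤ ∑ _k ∈ Γ₂, μ ^ 2 * Γ₁.card * E := Finset.sum_le_sum fun k _ => hkey2 k
      _ = Γ₂.card * (μ ^ 2 * Γ₁.card * E) := by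
          rw [Finset.sum_const, nsmul_eq_mul]
  have hone : 1 ≤ μ ^ 2 * (Γ₁.card * Γ₂.card) := by
    have h := (mul_le_mul_iff_of_pos_right hEpos).mp (by linarith [hmain] : 1 * E ≤ (Γ₂.card * (μ ^ 2 * Γ₁.card)) * E)
    nlinarith [h]
  have hμpos : 0 < μ := by
    rcases lt_or_eq_of_le hμ0 with h | h
    · exact h
    · exfalso; rw [← h] at hone; simp at hone; linarith
  have hc : (0:ℝ) ≤ (Γ₁.card : ℝ) * Γ₂.card := mul_nonneg (Nat.cast_nonneg _) (Nat.cast_nonneg _)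
  have hfirst : 1 / μ ^ 2 ≤ (Γ₁.card : ℝ) * Γ₂.card := by
    rw [div_le_iff₀ (by positivity)]
    linarith [hone]
  refine ⟨hfirst, ?_⟩
  -- second part via AM-GM
  have hs1 : 1 / μ ≤ Real.sqrt ((Γ₁.card : ℝ) * Γ₂.card) := by
    rw [show (1:ℝ)/μ = Real.sqrt ((1/μ)^2) from (Real.sqrt_sq (by positivity)).symm]
    apply Real.sqrt_le_sqrt
    rw [div_pow, one_pow]
    exact hfirst
  have hsqrt_mul : Real.sqrt ((Γ₁.card : ℝ) * Γ₂.card)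
      = Real.sqrt (Γ₁.card : ℝ) * Real.sqrt (Γ₂.card : ℝ) :=
    Real.sqrt_mul (Nat.cast_nonneg _) _
  have hamgm : 2 * (Real.sqrt (Γ₁.card : ℝ) * Real.sqrt (Γ₂.card : ℝ))
      ≤ (Γ₁.card : ℝ) + Γ₂.card := by
    have h1 := Real.sq_sqrt (Nat.cast_nonneg Γ₁.card : (0:ℝ) ≤ Γ₁.card)
    have h2 := Real.sq_sqrt (Nat.cast_nonneg Γ₂.card : (0:ℝ) ≤ Γ₂.card)
    nlinarith [sq_nonneg (Real.sqrt (Γ₁.card : ℝ) - Real.sqrt (Γ₂.card : ℝ))]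
  calc 2 / μ = 2 * (1 / μ) := by ring
    _ ≤ 2 * Real.sqrt ((Γ₁.card : ℝ) * Γ₂.card) := by linarith [hs1]
    _ = 2 * (Real.sqrt (Γ₁.card : ℝ) * Real.sqrt (Γ₂.card : ℝ)) := by rw [hsqrt_mul]
    _ ≤ (Γ₁.card : ℝ) + Γ₂.card := hamgm
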